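/- Let X be a nonempty finite-dimensional Noetherian topological space. Then X is biequidimensional if and only if X is equicodimensional and for all irreducible closed subsets Y ⊆ Z of X one has codim(Y, X) = codim(Y, Z) + codim(Z, X). -/

import Mathlib

open Order TopologicalSpace

/-- A maximal chain of irreducible closed subsets. -/
def IsMaximalChain {α : Type*} [PartialOrder α] (p : LTSeries α) : Prop :=
  IsMin p.head ∧ IsMax p.last ∧ ∀ i : Fin p.length, p.toFun i.castSucc ⋖ p.toFun i.succ

namespace StmtAux

variable {α : Type*} [PartialOrder α]

/-- A saturated chain: each step is a covering relation. -/
def Sat (p : LTSeries α) : Prop := ∀ i : Fin p.length, p.toFun i.castSucc ⋖ p.toFun i.succ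

lemma exists_nat_bound {β : Type*} [Preorder β] (h : krullDim β < ⊤) :
    ∃ n : ℕ, ∀ p : LTSeries β, p.length ≤ n := by
  rcases hk : krullDim β with _ | k
  · refine ⟨0, fun p => ?_⟩
    have h1 := LTSeries.length_le_krullDim p
    rw [hk] at h1
    have h2 : ((p.length : ℕ∞) : WithBot ℕ∞) ≤ ⊥ := h1
    exact absurd h2 (WithBot.not_coe_le_bot _)
  · have hk2 : krullDim β = ((k : ℕ∞) : WithBot ℕ∞) := hk
    rw [hk2] at h
    have hk' : k ≠ ⊤ := by
      rintro rfl
      exact lt_irrefl _ h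
    lift k to ℕ using hk'
    refine ⟨k, fun p => ?_⟩
    have h1 := LTSeries.length_le_krullDim p
    rw [hk2] at h1
    exact_mod_cast h1

lemma exists_maxlen {β : Type*} [Preorder β] [Nonempty β] {n : ℕ}
    (hn : ∀ p : LTSeries β, p.length ≤ n) :
    ∃ p : LTSeries β, ∀ q : LTSeries β, q.length ≤ p.length := by
  set S : Set ℕ := Set.range (fun p : LTSeries β => p.length) with hS
  have hne : S.Nonempty := ⟨_, ⟨RelSeries.singleton _ (Classical.arbitrary β), rfl⟩⟩
  have hbdd : BddAbove S := ⟨n, by rintro _ ⟨p, rfl⟩; exact hn p⟩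
  obtain ⟨p, hp⟩ := Nat.sSup_mem hne hbdd
  have hp' : p.length = sSup S := hp
  refine ⟨p, fun q => ?_⟩
  have h2 : q.length ≤ sSup S := le_csSup hbdd ⟨q, rfl⟩
  omega

lemma krullDim_eq_of_maxlen {β : Type*} [Preorder β] (p : LTSeries β)
    (hp : ∀ q : LTSeries β, q.length ≤ p.length) :
    krullDim β = p.length :=
  le_antisymm (iSup_le fun q => by exact_mod_cast hp q) (LTSeries.length_le_krullDim p)

lemma maxlen_isMin_head (p : LTSeries α) (hp : ∀ q : LTSeries α, q.length ≤ p.length) :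
    IsMin p.head := by
  by_contra h
  obtain ⟨b, hb⟩ := not_isMin_iff.mp h
  have := hp (p.cons b hb)
  simp [RelSeries.cons_length] at this

lemma maxlen_isMax_last (p : LTSeries α) (hp : ∀ q : LTSeries α, q.length ≤ p.length) :
    IsMax p.last := by
  by_contra h
  obtain ⟨b, hb⟩ := not_isMax_iff.mp h
  have := hp (p.snoc b hb)
  simp [RelSeries.snoc_length] at this

lemma maxlen_sat (p : LTSeries α) (hp : ∀ q : LTSeries α, q.length ≤ p.length) :
    Sat p := by
  intro i
  by_contra h
  obtain ⟨c, hc1, hc2⟩ := (not_covBy_iff (p.step i)).mp h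
  have := hp (p.insertNth i c hc1 hc2)
  simp [RelSeries.insertNth_length] at this

/-- covering relations in an order-convex subset are covering relations in the
ambient poset -/
lemma covBy_of_subtype {S : Set α}
    (hS : ∀ ⦃u v w : α⦄, u ∈ S → v ∈ S → u < w → w < v → w ∈ S)
    {a b : S} (h : a ⋖ b) : (a : α) ⋖ (b : α) := by
  refine ⟨by exact_mod_cast h.1, fun c hac hcb => ?_⟩
  have hcS : c ∈ S := hS a.2 b.2 hac hcb
  exact h.2 (show a < ⟨c, hcS⟩ from hac) (show (⟨c, hcS⟩ : S) < b from hcb)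

lemma sat_map_val {S : Set α} {p : LTSeries S}
    (hS : ∀ ⦃u v w : α⦄, u ∈ S → v ∈ S → u < w → w < v → w ∈ S)
    (hp : Sat p) : Sat (p.map Subtype.val (Subtype.strictMono_coe S)) := by
  intro i
  exact covBy_of_subtype hS (hp i)

lemma bound_subtype {S : Set α} {n : ℕ} (hn : ∀ p : LTSeries α, p.length ≤ n)
    (p : LTSeries S) : p.length ≤ n := by
  simpa using hn (p.map Subtype.val (Subtype.strictMono_coe S))

lemma length_le_krullDim_of_mem {S : Set α} (p : LTSeries α) (h : ∀ i, p.toFun i ∈ S) :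
    (p.length : WithBot ℕ∞) ≤ krullDim S := by
  let q : LTSeries S := ⟨p.length, fun i => ⟨p.toFun i, h i⟩, fun i => p.step i⟩
  exact LTSeries.length_le_krullDim q

lemma head_le_apply (p : LTSeries α) (i : Fin (p.length + 1)) : p.head ≤ p.toFun i :=
  p.monotone (Fin.zero_le i)

lemma apply_le_last (p : LTSeries α) (i : Fin (p.length + 1)) : p.toFun i ≤ p.last :=
  p.monotone (Fin.le_last i)

/-- smash of saturated chains is saturated -/
lemma sat_smash {p q : LTSeries α} (h : p.last = q.head)
    (hp : Sat p) (hq : Sat q) : Sat (p.smash q h) := by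
  intro i
  have hi' : i.1 < p.length + q.length := i.2
  rcases lt_or_ge i.1 p.length with hi | hi
  · have e1 : i.castSucc = (Fin.castSucc <| Fin.castAdd q.length ⟨i.1, hi⟩) := by
      apply Fin.ext; rfl
    have e2 : i.succ = (Fin.castAdd q.length ⟨i.1, hi⟩).succ := by
      apply Fin.ext; rfl
    have v1 : (p.smash q h).toFun i.castSucc
        = p.toFun ((⟨i.1, hi⟩ : Fin p.length).castSucc) :=
      (congrArg _ e1).trans (RelSeries.smash_castAdd h ⟨i.1, hi⟩)
    have v2 : (p.smash q h).toFun i.succ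
        = p.toFun ((⟨i.1, hi⟩ : Fin p.length).succ) :=
      (congrArg _ e2).trans (RelSeries.smash_succ_castAdd h ⟨i.1, hi⟩)
    rw [v1, v2]
    exact hp _
  · have hi2 : i.1 - p.length < q.length := by omega
    have e1 : i.castSucc = (Fin.castSucc <| Fin.natAdd p.length ⟨i.1 - p.length, hi2⟩) := by
      apply Fin.ext
      show i.1 = p.length + (i.1 - p.length)
      omega
    have e2 : i.succ = (Fin.natAdd p.length ⟨i.1 - p.length, hi2⟩).succ := by
      apply Fin.ext
      show i.1 + 1 = p.length + (i.1 - p.length) + 1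
      omega
    have v1 : (p.smash q h).toFun i.castSucc
        = q.toFun ((⟨i.1 - p.length, hi2⟩ : Fin q.length).castSucc) :=
      (congrArg _ e1).trans (RelSeries.smash_natAdd h ⟨i.1 - p.length, hi2⟩)
    have v2 : (p.smash q h).toFun i.succ
        = q.toFun ((⟨i.1 - p.length, hi2⟩ : Fin q.length).succ) :=
      (congrArg _ e2).trans (RelSeries.smash_succ_natAdd h ⟨i.1 - p.length, hi2⟩)
    rw [v1, v2]
    exact hq _

/-- In a poset with bounded chain lengths, for `a ≤ b` there is a saturated chain from `a`
to `b` whose length is the Krull dimension of the interval. -/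
lemma exists_max_chain_Icc {n : ℕ} (hn : ∀ p : LTSeries α, p.length ≤ n)
    {a b : α} (hab : a ≤ b) :
    ∃ p : LTSeries α, p.head = a ∧ p.last = b ∧ Sat p ∧
      krullDim (Set.Icc a b) = p.length := by
  have hne : Nonempty (Set.Icc a b) := ⟨⟨a, le_refl a, hab⟩⟩
  obtain ⟨q, hq⟩ := exists_maxlen (β := Set.Icc a b) (bound_subtype hn)
  have hconv : ∀ ⦃u v w : α⦄, u ∈ Set.Icc a b → v ∈ Set.Icc a b → u < w → w < v →
      w ∈ Set.Icc a b := fun u v w hu hv huw hwv => ⟨hu.1.trans huw.le, hwv.le.trans hv.2⟩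
  have hhead : q.head = ⟨a, le_refl a, hab⟩ := by
    have := maxlen_isMin_head q hq
    have h1 : (⟨a, le_refl a, hab⟩ : Set.Icc a b) ≤ q.head := q.head.2.1
    exact le_antisymm (this h1) h1
  have hlast : q.last = ⟨b, hab, le_refl b⟩ := by
    have := maxlen_isMax_last q hq
    have h1 : q.last ≤ (⟨b, hab, le_refl b⟩ : Set.Icc a b) := q.last.2.2
    exact le_antisymm h1 (this h1)
  refine ⟨q.map Subtype.val (Subtype.strictMono_coe _), ?_, ?_, ?_, ?_⟩
  · rw [LTSeries.head_map, hhead]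
  · rw [LTSeries.last_map, hlast]
  · exact sat_map_val hconv (maxlen_sat q hq)
  · simpa using krullDim_eq_of_maxlen q hq

lemma exists_max_chain_Ici {n : ℕ} (hn : ∀ p : LTSeries α, p.length ≤ n) (a : α) :
    ∃ p : LTSeries α, p.head = a ∧ IsMax p.last ∧ Sat p ∧
      krullDim (Set.Ici a) = p.length := by
  have hne : Nonempty (Set.Ici a) := ⟨⟨a, le_refl a⟩⟩
  obtain ⟨q, hq⟩ := exists_maxlen (β := Set.Ici a) (bound_subtype hn)
  have hconv : ∀ ⦃u v w : α⦄, u ∈ Set.Ici a → v ∈ Set.Ici a → u < w → w < v →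
      w ∈ Set.Ici a := fun u v w hu _ huw _ => hu.trans huw.le
  have hhead : q.head = ⟨a, le_refl a⟩ := by
    have := maxlen_isMin_head q hq
    have h1 : (⟨a, le_refl a⟩ : Set.Ici a) ≤ q.head := q.head.2
    exact le_antisymm (this h1) h1
  refine ⟨q.map Subtype.val (Subtype.strictMono_coe _), ?_, ?_, ?_, ?_⟩
  · rw [LTSeries.head_map, hhead]
  · have hm := maxlen_isMax_last q hq
    intro c hc
    have hca : c ∈ Set.Ici a := q.last.2.trans (by simpa using hc)
    have : q.last ≤ ⟨c, hca⟩ := Subtype.coe_le_coe.mp (by simpa using hc)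
    exact hm this
  · exact sat_map_val hconv (maxlen_sat q hq)
  · simpa using krullDim_eq_of_maxlen q hq

lemma exists_max_chain_Iic {n : ℕ} (hn : ∀ p : LTSeries α, p.length ≤ n) (a : α) :
    ∃ p : LTSeries α, IsMin p.head ∧ p.last = a ∧ Sat p := by
  have hne : Nonempty (Set.Iic a) := ⟨⟨a, le_refl a⟩⟩
  obtain ⟨q, hq⟩ := exists_maxlen (β := Set.Iic a) (bound_subtype hn)
  have hconv : ∀ ⦃u v w : α⦄, u ∈ Set.Iic a → v ∈ Set.Iic a → u < w → w < v →
      w ∈ Set.Iic a := fun u v w _ hv _ hwv => hwv.le.trans hv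
  have hlast : q.last = ⟨a, le_refl a⟩ := by
    have := maxlen_isMax_last q hq
    have h1 : q.last ≤ (⟨a, le_refl a⟩ : Set.Iic a) := q.last.2
    exact le_antisymm h1 (this h1)
  refine ⟨q.map Subtype.val (Subtype.strictMono_coe _), ?_, ?_, ?_⟩
  · have hm := maxlen_isMin_head q hq
    intro c hc
    have hca : c ∈ Set.Iic a := le_trans (show c ≤ (q.head : α) by simpa using hc) q.head.2
    have : (⟨c, hca⟩ : Set.Iic a) ≤ q.head := Subtype.coe_le_coe.mp (by simpa using hc)
    exact hm this
  · rw [LTSeries.last_map, hlast]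
  · exact sat_map_val hconv (maxlen_sat q hq)

lemma krullDim_Ici_of_isMax {a : α} (ha : IsMax a) : krullDim (Set.Ici a) = 0 := by
  haveI : Unique (Set.Ici a) :=
    ⟨⟨⟨a, le_refl a⟩⟩, fun x => Subtype.ext (le_antisymm (ha x.2) x.2)⟩
  exact krullDim_eq_zero_of_unique

lemma krullDim_Icc_of_covBy {a b : α} (hab : a ⋖ b) : krullDim (Set.Icc a b) = 1 := by
  have hle : ∀ q : LTSeries (Set.Icc a b), q.length ≤ 1 := by
    intro q
    by_contra h
    push_neg at h
    have h2 : 2 ≤ q.length := h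
    have h01 : q.toFun ⟨0, by omega⟩ < q.toFun ⟨1, by omega⟩ := by
      apply q.strictMono; exact Fin.mk_lt_mk.mpr (by omega)
    have h12 : q.toFun ⟨1, by omega⟩ < q.toFun ⟨2, by omega⟩ := by
      apply q.strictMono; exact Fin.mk_lt_mk.mpr (by omega)
    rcases hab.eq_or_eq (q.toFun ⟨1, by omega⟩).2.1 (q.toFun ⟨1, by omega⟩).2.2 with h1 | h1
    · have hlt : ((q.toFun ⟨0, by omega⟩ : Set.Icc a b) : α)
          < ((q.toFun ⟨1, by omega⟩ : Set.Icc a b) : α) := h01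
      rw [h1] at hlt
      exact absurd hlt (show a ≤ _ from (q.toFun ⟨0, by omega⟩).2.1).not_gt
    · have hlt : ((q.toFun ⟨1, by omega⟩ : Set.Icc a b) : α)
          < ((q.toFun ⟨2, by omega⟩ : Set.Icc a b) : α) := h12
      rw [h1] at hlt
      exact absurd hlt (show _ ≤ b from (q.toFun ⟨2, by omega⟩).2.2).not_gt
  apply le_antisymm
  · rw [show (1 : WithBot ℕ∞) = (((1 : ℕ) : ℕ∞) : WithBot ℕ∞) by norm_cast]
    exact iSup_le fun q => by exact_mod_cast hle q
  · let q : LTSeries (Set.Icc a b) :=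
      (RelSeries.singleton _ (⟨b, hab.le, le_refl b⟩ : Set.Icc a b)).cons
        ⟨a, le_refl a, hab.le⟩ (by exact hab.lt)
    have : (q.length : WithBot ℕ∞) ≤ krullDim (Set.Icc a b) := LTSeries.length_le_krullDim q
    have hl : q.length = 1 := rfl
    simpa [hl] using this

end StmtAux

open StmtAux in
/-- Let `X` be a nonempty finite-dimensional Noetherian topological space.  Then `X` is
biequidimensional (all maximal chains of irreducible closed subsets have the same length) if
and only if `X` is equicodimensional (all minimal irreducible closed subsets have the same
codimension in `X`) and for all irreducible closed subsets `Y ⊆ Z` of `X` one has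
`codim (Y, X) = codim (Y, Z) + codim (Z, X)`, where `codim (Y, X)` is the Krull dimension of
the poset of irreducible closed subsets containing `Y` and `codim (Y, Z)` that of the
interval `[Y, Z]`. -/
theorem stmt_5 (X : Type*) [TopologicalSpace X] [NoetherianSpace X] [Nonempty X]
    (hfd : topologicalKrullDim X < ⊤) :
    (∀ p q : LTSeries (IrreducibleCloseds X),
        IsMaximalChain p → IsMaximalChain q → p.length = q.length) ↔
      ((∀ Y Y' : IrreducibleCloseds X, IsMin Y → IsMin Y' →
          Order.krullDim (Set.Ici Y) = Order.krullDim (Set.Ici Y')) ∧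
        ∀ Y Z : IrreducibleCloseds X, Y ≤ Z →
          Order.krullDim (Set.Ici Y)
            = Order.krullDim (Set.Icc Y Z) + Order.krullDim (Set.Ici Z)) := by
  set A := IrreducibleCloseds X with hA
  haveI : Nonempty A := ⟨⟨closure {Classical.arbitrary X},
    isIrreducible_singleton.closure, isClosed_closure⟩⟩
  have hdim : krullDim A < ⊤ := hfd
  obtain ⟨n, hn⟩ := exists_nat_bound hdim
  constructor
  · -- forward direction
    intro hbi
    constructor
    · -- equicodimensional
      intro Y Y' hY hY'
      obtain ⟨p, hph, hpm, hps, hpd⟩ := exists_max_chain_Ici hn Y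
      obtain ⟨p', hph', hpm', hps', hpd'⟩ := exists_max_chain_Ici hn Y'
      have h1 : IsMaximalChain p := ⟨hph ▸ hY, hpm, hps⟩
      have h2 : IsMaximalChain p' := ⟨hph' ▸ hY', hpm', hps'⟩
      rw [hpd, hpd', hbi p p' h1 h2]
    · -- additivity
      intro Y Z hYZ
      obtain ⟨s, hsmin, hslast, hssat⟩ := exists_max_chain_Iic hn Y
      obtain ⟨r, hrh, hrm, hrs, hrd⟩ := exists_max_chain_Ici hn Y
      obtain ⟨t, hth, htl, hts, htd⟩ := exists_max_chain_Icc hn hYZ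
      obtain ⟨u, huh, hum, hus, hud⟩ := exists_max_chain_Ici hn Z
      -- maximal chain through s and r
      have hsr : s.last = r.head := by rw [hslast, hrh]
      have hmc1 : IsMaximalChain (s.smash r hsr) :=
        ⟨by rwa [RelSeries.head_smash], by rwa [RelSeries.last_smash],
          sat_smash hsr hssat hrs⟩
      have htu : t.last = u.head := by rw [htl, huh]
      have hst : s.last = (t.smash u htu).head := by rw [hslast, RelSeries.head_smash, hth]
      have hmc2 : IsMaximalChain (s.smash (t.smash u htu) hst) :=
        ⟨by rwa [RelSeries.head_smash], by rwa [RelSeries.last_smash, RelSeries.last_smash],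
          sat_smash hst hssat (sat_smash htu hts hus)⟩
      have hlen := hbi _ _ hmc1 hmc2
      simp only [RelSeries.smash_length] at hlen
      have hlen' : r.length = t.length + u.length := by omega
      rw [hrd, htd, hud, hlen']
      norm_cast
  · -- backward direction
    rintro ⟨hequi, hadd⟩ p q hp hq
    have key : ∀ (p : LTSeries A), IsMaximalChain p →
        krullDim (Set.Ici p.head) = (p.length : WithBot ℕ∞) := by
      intro p hp
      obtain ⟨hpmin, hpmax, hpsat⟩ := hp
      have main : ∀ j : ℕ, j ≤ p.length →
          krullDim (Set.Ici (p.toFun ⟨p.length - j, by omega⟩)) = (j : WithBot ℕ∞) := by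
        intro j
        induction j with
        | zero =>
          intro _
          have : p.toFun ⟨p.length - 0, by omega⟩ = p.last :=
            congrArg p.toFun (by ext; simp)
          rw [this]
          simpa using krullDim_Ici_of_isMax hpmax
        | succ j ih =>
          intro hj
          have hj' : j ≤ p.length := by omega
          have hidx : p.length - (j + 1) < p.length := by omega
          have hcov : p.toFun ⟨p.length - (j + 1), by omega⟩ ⋖ p.toFun ⟨p.length - j, by omega⟩ := by
            have := hpsat ⟨p.length - (j + 1), hidx⟩
            have e1 : (⟨p.length - (j + 1), hidx⟩ : Fin p.length).castSucc
                = ⟨p.length - (j + 1), by omega⟩ := by ext; simp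
            have e2 : (⟨p.length - (j + 1), hidx⟩ : Fin p.length).succ
                = ⟨p.length - j, by omega⟩ := by ext; simp; omega
            rwa [e1, e2] at this
          have := hadd _ _ hcov.le
          rw [krullDim_Icc_of_covBy hcov, ih hj'] at this
          rw [this, add_comm]
          norm_cast
      have := main p.length (le_refl _)
      have e : p.toFun ⟨p.length - p.length, by omega⟩ = p.head :=
        congrArg p.toFun (by ext; simp)
      rwa [e] at this
    have h1 := key p hp
    have h2 := key q hq
    have := hequi p.head q.head hp.1 hq.1
    rw [h1, h2] at this
    exact_mod_cast this
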